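/- arXiv:2403.15889 — 4 statements merged into one kernel-verified Lean document; each statement's English description precedes it below -/
import Mathlib

section
/- Let 2 ≤ N ≤ q be integers, D > 0 and 0 < δ ≤ 1. Set Γ := δ^{2−N}(N−1)! and ε := (Γ+1)^{−1}δ. Let H_1,…,H_N be distinct m-dimensional closed half-planes in ℝ^{m+n} all having the same (m−1)-dimensional linear subspace V as boundary, and for each i let π_i denote the m-dimensional plane obtained as the union of H_i with its reflection across V. Set ζ := max_{i<j} dist_H(π_i ∩ B̄_1, π_j ∩ B̄_1), where dist_H is Hausdorff distance and B̄_1 is the closed unit ball. If D ≤ ε ζ, then there exists a subset I ⊂ {1,…,N} with #I ≥ 2 such that: (1) max_j min_{i∈I} dist_H(H_i ∩ B̄_1, H_j ∩ B̄_1) ≤ Γ D; (2) D + max_j min_{i∈I} dist_H(H_i ∩ B̄_1, H_j ∩ B̄_1) ≤ δ · min_{i,j∈I, i<j} dist_H(H_i ∩ B̄_1, H_j ∩ B̄_1); (3) max_{i,j∈I, i<j} dist_H(π_i ∩ B̄_1, π_j ∩ B̄_1) = ζ. -/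
open Metric

/-- Maximal pairwise Hausdorff separation (inside `B`) of the sets `f i`, `i ∈ I`. -/
noncomputable def maxSep {ι : Type*} {α : Type*} [MetricSpace α]
    (B : Set α) (I : Finset ι) (f : ι → Set α) : ℝ :=
  sSup {d : ℝ | ∃ i ∈ I, ∃ j ∈ I, i ≠ j ∧ d = Metric.hausdorffDist (f i ∩ B) (f j ∩ B)}

/-- Minimal pairwise Hausdorff separation (inside `B`) of the sets `f i`, `i ∈ I`. -/
noncomputable def minSep {ι : Type*} {α : Type*} [MetricSpace α]
    (B : Set α) (I : Finset ι) (f : ι → Set α) : ℝ :=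
  sInf {d : ℝ | ∃ i ∈ I, ∃ j ∈ I, i ≠ j ∧ d = Metric.hausdorffDist (f i ∩ B) (f j ∩ B)}

private lemma two_pow_le_factorial (k : ℕ) : 2 ^ k ≤ Nat.factorial (k + 1) := by
  induction k with
  | zero => simp
  | succ k ih =>
    calc 2 ^ (k + 1) = 2 * 2 ^ k := by ring
    _ ≤ 2 * (k + 1).factorial := Nat.mul_le_mul_left 2 ih
    _ ≤ (k + 2) * (k + 1).factorial := Nat.mul_le_mul_right _ (by omega)
    _ = (k + 2).factorial := (Nat.factorial_succ _).symm

private lemma hausdorffDist_union_le {α : Type*} [MetricSpace α] {s s' t t' : Set α}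
    (h1 : EMetric.hausdorffEdist s t ≠ ⊤) (h2 : EMetric.hausdorffEdist s' t' ≠ ⊤) :
    hausdorffDist (s ∪ s') (t ∪ t') ≤ max (hausdorffDist s t) (hausdorffDist s' t') := by
  have key : EMetric.hausdorffEdist (s ∪ s') (t ∪ t') ≤
      max (EMetric.hausdorffEdist s t) (EMetric.hausdorffEdist s' t') := by
    refine EMetric.hausdorffEdist_le_of_infEdist ?_ ?_
    · rintro x (hx | hx)
      · exact le_trans (le_trans (EMetric.infEdist_anti Set.subset_union_left)
          (EMetric.infEdist_le_hausdorffEdist_of_mem hx)) (le_max_left _ _)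
      · exact le_trans (le_trans (EMetric.infEdist_anti Set.subset_union_right)
          (EMetric.infEdist_le_hausdorffEdist_of_mem hx)) (le_max_right _ _)
    · rintro x (hx | hx)
      · refine le_trans (le_trans (EMetric.infEdist_anti Set.subset_union_left)
          (EMetric.infEdist_le_hausdorffEdist_of_mem hx)) ?_
        rw [EMetric.hausdorffEdist_comm]
        exact le_max_left _ _
      · refine le_trans (le_trans (EMetric.infEdist_anti Set.subset_union_right)
          (EMetric.infEdist_le_hausdorffEdist_of_mem hx)) ?_
        rw [EMetric.hausdorffEdist_comm]
        exact le_max_right _ _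
  have hmax : max (EMetric.hausdorffEdist s t) (EMetric.hausdorffEdist s' t') ≠ ⊤ :=
    (max_lt h1.lt_top h2.lt_top).ne
  have := ENNReal.toReal_mono hmax key
  rwa [ENNReal.toReal_max h1 h2] at this

private lemma prune_core {α : Type*} [MetricSpace α] {N : ℕ} (B : Set α)
    (H pl : Fin N → Set α)
    (hne : ∀ i, (H i ∩ B).Nonempty) (hbd : ∀ i, Bornology.IsBounded (H i ∩ B))
    (hle : ∀ i j, hausdorffDist (pl i ∩ B) (pl j ∩ B)
      ≤ hausdorffDist (H i ∩ B) (H j ∩ B))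
    (a b : Fin N) (hab : a ≠ b)
    (D δ ζ : ℝ) (hD : 0 < D) (hδ0 : 0 < δ) (hδ1 : δ ≤ 1)
    (hζ : hausdorffDist (pl a ∩ B) (pl b ∩ B) = ζ)
    (hζD : (2 / δ) ^ (N - 2) * D < δ * ζ) :
    ∀ (k : ℕ) (I : Finset (Fin N)), I.card ≤ k → a ∈ I → b ∈ I →
    ∀ E : ℝ, 0 ≤ E →
    (∀ j, ∃ i ∈ I, hausdorffDist (H i ∩ B) (H j ∩ B) ≤ E) →
    D + E ≤ (2 / δ) ^ (N - I.card) * D →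
    ∃ I' : Finset (Fin N), I' ⊆ I ∧ a ∈ I' ∧ b ∈ I' ∧
      ∃ E' : ℝ, 0 ≤ E' ∧
        D + E' ≤ (2 / δ) ^ (N - 2) * D ∧
        (∀ j, ∃ i ∈ I', hausdorffDist (H i ∩ B) (H j ∩ B) ≤ E') ∧
        D + E' ≤ δ * minSep B I' H := by
  have hδ2 : (1 : ℝ) ≤ 2 / δ := by
    rw [le_div_iff₀ hδ0]; linarith
  intro k
  induction k with
  | zero =>
    intro I hcard ha _
    exact absurd (Finset.card_eq_zero.mp (Nat.le_zero.mp hcard) ▸ ha) (by simp)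
  | succ k ih =>
    intro I hcard ha hb E hE0 hcov hbound
    have hcard2 : 2 ≤ I.card := Finset.one_lt_card.mpr ⟨a, ha, b, hb, hab⟩
    have hcardN : I.card ≤ N := by
      simpa using Finset.card_le_univ I
    have hpowmono : (2 / δ) ^ (N - I.card) ≤ (2 / δ) ^ (N - 2) :=
      pow_le_pow_right₀ hδ2 (Nat.sub_le_sub_left hcard2 N)
    have hboundΓ : D + E ≤ (2 / δ) ^ (N - 2) * D :=
      le_trans hbound (mul_le_mul_of_nonneg_right hpowmono hD.le)
    by_cases hstop : D + E ≤ δ * minSep B I H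
    · exact ⟨I, subset_rfl, ha, hb, E, hE0, hboundΓ, hcov, hstop⟩
    · push_neg at hstop
      set S : Set ℝ := {d : ℝ | ∃ i ∈ I, ∃ j ∈ I, i ≠ j ∧
        d = Metric.hausdorffDist (H i ∩ B) (H j ∩ B)} with hS
      have hSne : S.Nonempty := ⟨_, a, ha, b, hb, hab, rfl⟩
      have hSfin : S.Finite := by
        refine Set.Finite.subset (Set.finite_range
          (fun p : Fin N × Fin N => hausdorffDist (H p.1 ∩ B) (H p.2 ∩ B))) ?_
        rintro d ⟨i, -, j, -, -, rfl⟩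
        exact ⟨(i, j), rfl⟩
      have hmineq : minSep B I H = sInf S := rfl
      have hmem : minSep B I H ∈ S := by
        rw [hmineq]; exact hSne.csInf_mem hSfin
      obtain ⟨i, hi, j, hj, hij, hμ⟩ := hmem
      set μ := minSep B I H with hμdef
      have hμ0 : 0 ≤ μ := hμ ▸ hausdorffDist_nonneg
      have hμlt : δ * μ < D + E := hstop
      have hμζ : μ < ζ := by
        have h2 : (2 / δ) ^ (N - 2) * D < δ * ζ := hζD
        nlinarith
      -- the minimizing pair is not {a, b}
      have key : (i ≠ a ∧ i ≠ b) ∨ (j ≠ a ∧ j ≠ b) := by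
        by_contra hcon
        push_neg at hcon
        obtain ⟨h1, h2⟩ := hcon
        have hpair : (i = a ∧ j = b) ∨ (i = b ∧ j = a) := by
          by_cases hia : i = a
          · refine Or.inl ⟨hia, ?_⟩
            apply h2
            intro hja
            exact hij (by rw [hia, hja])
          · have hib : i = b := h1 hia
            refine Or.inr ⟨hib, ?_⟩
            by_contra hja
            have hjb : j = b := h2 hja
            exact hij (by rw [hib, hjb])
        have hζμ : ζ ≤ μ := by
          rcases hpair with ⟨hia, hjb⟩ | ⟨hib, hja⟩
          · rw [hμ, hia, hjb, ← hζ]; exact hle a b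
          · rw [hμ, hib, hja, ← hζ, hausdorffDist_comm (s := pl a ∩ B)]
            exact hle b a
        linarith
      -- remove r, keeping s as its replacement
      have step : ∀ r s : Fin N, r ∈ I → s ∈ I → r ≠ a → r ≠ b → s ≠ r →
          hausdorffDist (H s ∩ B) (H r ∩ B) = μ →
          ∃ I' : Finset (Fin N), I' ⊆ I ∧ a ∈ I' ∧ b ∈ I' ∧
            ∃ E' : ℝ, 0 ≤ E' ∧
              D + E' ≤ (2 / δ) ^ (N - 2) * D ∧
              (∀ j, ∃ i ∈ I', hausdorffDist (H i ∩ B) (H j ∩ B) ≤ E') ∧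
              D + E' ≤ δ * minSep B I' H := by
        intro r s hr hs hra hrb hsr hμrs
        have hcarde : (I.erase r).card = I.card - 1 := Finset.card_erase_of_mem hr
        have hNsub : N - (I.card - 1) = N - I.card + 1 := by omega
        obtain ⟨I', hsub, ha', hb', E', hres⟩ :=
          ih (I.erase r) (by omega : (I.erase r).card ≤ k)
            (Finset.mem_erase.mpr ⟨fun h => hra h.symm, ha⟩)
            (Finset.mem_erase.mpr ⟨fun h => hrb h.symm, hb⟩)
            (E + μ) (by linarith)
            (by
              intro j'
              obtain ⟨i₀, hi₀, hd₀⟩ := hcov j'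
              by_cases hir : i₀ = r
              · refine ⟨s, Finset.mem_erase.mpr ⟨hsr, hs⟩, ?_⟩
                have fin1 : EMetric.hausdorffEdist (H s ∩ B) (H r ∩ B) ≠ ⊤ :=
                  hausdorffEdist_ne_top_of_nonempty_of_bounded (hne s) (hne r) (hbd s) (hbd r)
                calc hausdorffDist (H s ∩ B) (H j' ∩ B)
                    ≤ hausdorffDist (H s ∩ B) (H r ∩ B)
                      + hausdorffDist (H r ∩ B) (H j' ∩ B) := hausdorffDist_triangle fin1
                  _ ≤ μ + E := by
                      rw [hμrs]
                      have := hir ▸ hd₀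
                      linarith
                  _ = E + μ := by ring
              · exact ⟨i₀, Finset.mem_erase.mpr ⟨hir, hi₀⟩, by linarith⟩)
            (by
              rw [hcarde, hNsub, pow_succ]
              have h1 : μ < (D + E) / δ := by
                rw [lt_div_iff₀ hδ0]; linarith [hμlt]
              have h2 : D + (E + μ) ≤ (D + E) * (2 / δ) := by
                have : (D + E) * (2 / δ) = (D + E) + (D + E) * ((2 - δ) / δ) := by
                  field_simp; ring
                have h3 : (D + E) / δ ≤ (D + E) * ((2 - δ) / δ) := by
                  rw [div_le_iff₀ hδ0] at *
                  have hDE : 0 < D + E := by linarith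
                  have : (D + E) * ((2 - δ) / δ) * δ = (D + E) * (2 - δ) := by
                    field_simp
                  rw [this]
                  nlinarith
                linarith
              calc D + (E + μ) ≤ (D + E) * (2 / δ) := h2
                _ ≤ (2 / δ) ^ (N - I.card) * D * (2 / δ) := by
                    have h20 : (0 : ℝ) < 2 / δ := by positivity
                    nlinarith
                _ = (2 / δ) ^ (N - I.card) * (2 / δ) * D := by ring
            )
        exact ⟨I', fun x hx => Finset.mem_of_mem_erase (hsub hx), ha', hb', E', hres⟩
      rcases key with ⟨h1, h2⟩ | ⟨h1, h2⟩
      · exact step i j hi hj h1 h2 (fun h => hij h.symm)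
          (by rw [hausdorffDist_comm]; exact hμ.symm)
      · exact step j i hj hi h1 h2 hij hμ.symm

/-- **Pruning Lemma.**  `H i` are distinct `m`-dimensional closed half-planes with common
`(m-1)`-dimensional boundary `V`, `pl i` the full planes obtained by reflecting across `V`. -/
theorem pruning_lemma
    (m n q N : ℕ) (hm : 1 ≤ m) (hN : 2 ≤ N) (hNq : N ≤ q)
    (D δ : ℝ) (hD : 0 < D) (hδ0 : 0 < δ) (hδ1 : δ ≤ 1)
    (Γ ε : ℝ)
    (hΓ : Γ = δ ^ ((2 : ℤ) - (N : ℤ)) * ((N - 1).factorial : ℝ))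
    (hε : ε = δ / (Γ + 1))
    (V : Submodule ℝ (EuclideanSpace ℝ (Fin (m + n))))
    (hVdim : Module.finrank ℝ V = m - 1)
    (e : Fin N → EuclideanSpace ℝ (Fin (m + n)))
    (he : ∀ i, e i ≠ 0)
    (heV : ∀ i, ∀ v ∈ V, (inner ℝ (e i) v : ℝ) = 0)
    (H pl : Fin N → Set (EuclideanSpace ℝ (Fin (m + n))))
    (hH : ∀ i, H i = {x | ∃ v ∈ V, ∃ t : ℝ, 0 ≤ t ∧ x = v + t • e i})
    (hpl : ∀ i, pl i = {x | ∃ v ∈ V, ∃ t : ℝ, x = v + t • e i})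
    (hdistinct : ∀ i j, i ≠ j → H i ≠ H j)
    (hDζ : D ≤ ε * maxSep (closedBall 0 1) Finset.univ pl) :
    ∃ I : Finset (Fin N), 2 ≤ I.card ∧
      (∀ j, ∃ i ∈ I,
        Metric.hausdorffDist (H i ∩ closedBall 0 1) (H j ∩ closedBall 0 1) ≤ Γ * D) ∧
      (∀ j, ∃ i ∈ I,
        D + Metric.hausdorffDist (H i ∩ closedBall 0 1) (H j ∩ closedBall 0 1)
          ≤ δ * minSep (closedBall 0 1) I H) ∧
      maxSep (closedBall 0 1) I pl = maxSep (closedBall 0 1) Finset.univ pl := by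
  classical
  set B : Set (EuclideanSpace ℝ (Fin (m + n))) := closedBall 0 1 with hB
  -- basic facts
  have h0B : (0 : EuclideanSpace ℝ (Fin (m + n))) ∈ B := mem_closedBall_self zero_le_one
  have hne : ∀ i, (H i ∩ B).Nonempty := by
    intro i
    refine ⟨0, ?_, h0B⟩
    rw [hH]
    exact ⟨0, V.zero_mem, 0, le_refl 0, by simp⟩
  have hbd : ∀ i, Bornology.IsBounded (H i ∩ B) :=
    fun i => Metric.isBounded_closedBall.subset Set.inter_subset_right
  -- the reflection across V
  have heV' : ∀ i, e i ∈ Vᗮ := by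
    intro i
    rw [Submodule.mem_orthogonal]
    intro u hu
    rw [real_inner_comm]
    exact heV i u hu
  have hR : ∀ (i : Fin N) (v : EuclideanSpace ℝ (Fin (m + n))), v ∈ V → ∀ t : ℝ,
      V.reflection (v + t • e i) = v - t • e i := by
    intro i v hv t
    rw [map_add, map_smul, V.reflection_mem_subspace_eq_self hv,
      V.reflection_mem_subspace_orthogonalComplement_eq_neg (heV' i), smul_neg,
      ← sub_eq_add_neg]
  have hRnorm : ∀ x, ‖V.reflection x‖ = ‖x‖ := fun x =>
    V.reflection.norm_map x
  have hsplit : ∀ i, pl i ∩ B = (H i ∩ B) ∪ (V.reflection '' (H i ∩ B)) := by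
    intro i
    ext x
    constructor
    · rintro ⟨hx, hxB⟩
      rw [hpl] at hx
      obtain ⟨v, hv, t, rfl⟩ := hx
      rcases le_or_gt 0 t with ht | ht
      · exact Or.inl ⟨by rw [hH]; exact ⟨v, hv, t, ht, rfl⟩, hxB⟩
      · right
        have hRy : V.reflection (v + (-t) • e i) = v + t • e i := by
          rw [hR i v hv]; simp [neg_smul, sub_neg_eq_add]
        refine ⟨v + (-t) • e i, ⟨?_, ?_⟩, hRy⟩
        · rw [hH]; exact ⟨v, hv, -t, by linarith, rfl⟩
        · rw [hB, mem_closedBall_zero_iff] at hxB ⊢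
          calc ‖v + (-t) • e i‖ = ‖V.reflection (v + (-t) • e i)‖ := (hRnorm _).symm
            _ = ‖v + t • e i‖ := by rw [hRy]
            _ ≤ 1 := hxB
    · rintro (⟨hx, hxB⟩ | ⟨y, ⟨hy, hyB⟩, rfl⟩)
      · rw [hH] at hx
        obtain ⟨v, hv, t, ht, rfl⟩ := hx
        exact ⟨by rw [hpl]; exact ⟨v, hv, t, rfl⟩, hxB⟩
      · rw [hH] at hy
        obtain ⟨v, hv, t, ht, rfl⟩ := hy
        constructor
        · rw [hpl]
          exact ⟨v, hv, -t, by rw [hR i v hv]; simp [neg_smul, ← sub_eq_add_neg]⟩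
        · rw [hB, mem_closedBall_zero_iff] at hyB ⊢
          rw [hRnorm]
          exact hyB
  have hle : ∀ i j, hausdorffDist (pl i ∩ B) (pl j ∩ B)
      ≤ hausdorffDist (H i ∩ B) (H j ∩ B) := by
    intro i j
    have fin1 : EMetric.hausdorffEdist (H i ∩ B) (H j ∩ B) ≠ ⊤ :=
      hausdorffEdist_ne_top_of_nonempty_of_bounded (hne i) (hne j) (hbd i) (hbd j)
    have fin2 : EMetric.hausdorffEdist (V.reflection '' (H i ∩ B))
        (V.reflection '' (H j ∩ B)) ≠ ⊤ := by
      rwa [EMetric.hausdorffEdist, EMetric.hausdorffEdist_image V.reflection.isometry]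
    calc hausdorffDist (pl i ∩ B) (pl j ∩ B)
        = hausdorffDist ((H i ∩ B) ∪ (V.reflection '' (H i ∩ B)))
          ((H j ∩ B) ∪ (V.reflection '' (H j ∩ B))) := by rw [hsplit i, hsplit j]
      _ ≤ max (hausdorffDist (H i ∩ B) (H j ∩ B))
          (hausdorffDist (V.reflection '' (H i ∩ B)) (V.reflection '' (H j ∩ B))) :=
          hausdorffDist_union_le fin1 fin2
      _ = hausdorffDist (H i ∩ B) (H j ∩ B) := by
          rw [hausdorffDist_image V.reflection.isometry, max_self]
  -- the maximizing pair for the planes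
  set ζ : ℝ := maxSep B Finset.univ pl with hζdef
  set Spl : Set ℝ := {d : ℝ | ∃ i ∈ (Finset.univ : Finset (Fin N)), ∃ j ∈ Finset.univ,
    i ≠ j ∧ d = Metric.hausdorffDist (pl i ∩ B) (pl j ∩ B)} with hSpl
  have hζeq : ζ = sSup Spl := rfl
  have i0 : Fin N := ⟨0, by omega⟩
  have hSplfin : Spl.Finite := by
    refine Set.Finite.subset (Set.finite_range
      (fun p : Fin N × Fin N => hausdorffDist (pl p.1 ∩ B) (pl p.2 ∩ B))) ?_
    rintro d ⟨i, -, j, -, -, rfl⟩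
    exact ⟨(i, j), rfl⟩
  have hSplne : Spl.Nonempty := by
    refine ⟨_, ⟨0, by omega⟩, Finset.mem_univ _, ⟨1, by omega⟩, Finset.mem_univ _, ?_, rfl⟩
    simp [Fin.ext_iff]
  have hζmem : ζ ∈ Spl := by
    rw [hζeq]; exact hSplne.csSup_mem hSplfin
  obtain ⟨a, -, b, -, hab, hζab⟩ := hζmem
  -- numerical facts
  have hzpos : (0 : ℝ) < δ ^ ((2 : ℤ) - (N : ℤ)) := zpow_pos hδ0 _
  have hΓpos : 0 < Γ := by
    rw [hΓ]
    have : (0 : ℝ) < ((N - 1).factorial : ℝ) := by positivity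
    positivity
  have hzpow : δ ^ ((2 : ℤ) - (N : ℤ)) = (δ ^ (N - 2 : ℕ))⁻¹ := by
    have h1 : (2 : ℤ) - (N : ℤ) = -((N - 2 : ℕ) : ℤ) := by omega
    rw [h1, zpow_neg, zpow_natCast]
  have hfact : (2 : ℝ) ^ (N - 2 : ℕ) ≤ ((N - 1).factorial : ℝ) := by
    have h1 : (2 : ℕ) ^ (N - 2) ≤ (N - 1).factorial := by
      have : N - 1 = (N - 2) + 1 := by omega
      rw [this]
      exact two_pow_le_factorial (N - 2)
    calc (2 : ℝ) ^ (N - 2 : ℕ) = ((2 ^ (N - 2) : ℕ) : ℝ) := by push_cast; ring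
      _ ≤ ((N - 1).factorial : ℝ) := Nat.cast_le.mpr h1
  have hΓ2 : (2 / δ) ^ (N - 2 : ℕ) ≤ Γ := by
    have hinv : (0 : ℝ) ≤ (δ ^ (N - 2 : ℕ))⁻¹ := by positivity
    calc (2 / δ) ^ (N - 2 : ℕ) = 2 ^ (N - 2 : ℕ) * (δ ^ (N - 2 : ℕ))⁻¹ := by
          rw [div_pow, div_eq_mul_inv]
      _ ≤ ((N - 1).factorial : ℝ) * (δ ^ (N - 2 : ℕ))⁻¹ :=
          mul_le_mul_of_nonneg_right hfact hinv
      _ = Γ := by rw [hΓ, hzpow, mul_comm]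
  have hδζ : (Γ + 1) * D ≤ δ * ζ := by
    rw [hε] at hDζ
    have hΓ1 : (0 : ℝ) < Γ + 1 := by linarith
    have : (Γ + 1) * D ≤ (Γ + 1) * (δ / (Γ + 1) * maxSep (closedBall 0 1) Finset.univ pl) :=
      mul_le_mul_of_nonneg_left hDζ hΓ1.le
    calc (Γ + 1) * D ≤ (Γ + 1) * (δ / (Γ + 1) * maxSep (closedBall 0 1) Finset.univ pl) := this
      _ = δ * maxSep (closedBall 0 1) Finset.univ pl := by field_simp
      _ = δ * ζ := by rw [hζdef, hB]
  have hζD : (2 / δ) ^ (N - 2 : ℕ) * D < δ * ζ := by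
    have h1 : (2 / δ) ^ (N - 2 : ℕ) * D ≤ Γ * D := mul_le_mul_of_nonneg_right hΓ2 hD.le
    have h2 : Γ * D < (Γ + 1) * D := by nlinarith
    linarith
  -- apply the pruning iteration
  obtain ⟨I, -, haI, hbI, E', hE'0, hE'bd, hcov, hstop⟩ :=
    prune_core B H pl hne hbd hle a b hab D δ ζ hD hδ0 hδ1 hζab.symm hζD
      N Finset.univ (by simp) (Finset.mem_univ a) (Finset.mem_univ b) 0 le_rfl
      (fun j => ⟨j, Finset.mem_univ j, by rw [hausdorffDist_self_zero]⟩)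
      (by simp)
  have hE'Γ : E' ≤ Γ * D := by
    have h1 : (2 / δ) ^ (N - 2 : ℕ) * D ≤ Γ * D := mul_le_mul_of_nonneg_right hΓ2 hD.le
    linarith
  refine ⟨I, Finset.one_lt_card.mpr ⟨a, haI, b, hbI, hab⟩, ?_, ?_, ?_⟩
  · intro j
    obtain ⟨i, hi, hd⟩ := hcov j
    exact ⟨i, hi, le_trans hd hE'Γ⟩
  · intro j
    obtain ⟨i, hi, hd⟩ := hcov j
    exact ⟨i, hi, by unfold B at hstop; linarith⟩
  · -- the maximal plane separation is preserved
    set SI : Set ℝ := {d : ℝ | ∃ i ∈ I, ∃ j ∈ I,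
      i ≠ j ∧ d = Metric.hausdorffDist (pl i ∩ B) (pl j ∩ B)} with hSI
    have hIeq : maxSep B I pl = sSup SI := rfl
    have hSIfin : SI.Finite := by
      refine Set.Finite.subset (Set.finite_range
        (fun p : Fin N × Fin N => hausdorffDist (pl p.1 ∩ B) (pl p.2 ∩ B))) ?_
      rintro d ⟨i, -, j, -, -, rfl⟩
      exact ⟨(i, j), rfl⟩
    have hSIne : SI.Nonempty := ⟨_, a, haI, b, hbI, hab, rfl⟩
    have hsub : SI ⊆ Spl := by
      rintro d ⟨i, -, j, -, hij, rfl⟩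
      exact ⟨i, Finset.mem_univ i, j, Finset.mem_univ j, hij, rfl⟩
    show maxSep B I pl = maxSep B Finset.univ pl
    rw [hIeq, ← hζdef]
    refine le_antisymm ?_ ?_
    · exact csSup_le hSIne (fun d hd => by
        rw [hζeq]; exact le_csSup hSplfin.bddAbove (hsub hd))
    · rw [hζab]
      exact le_csSup hSIfin.bddAbove ⟨a, haI, b, hbI, hab, rfl⟩
end

section
/- For every pair of integers 2 ≤ N ≤ q and every 0 < δ ≤ 1 there exists η = η(δ, N) > 0 with the following property. Let H_1,…,H_N be distinct m-dimensional closed half-planes in ℝ^{m+n} with common (m−1)-dimensional boundary subspace V, and let π_i be the full m-plane extending H_i across V. Then there exist κ ∈ ℕ ∪ {0} and subcollections {1,…,N} = I(0) ⊋ I(1) ⊋ ⋯ ⊋ I(κ) with #I(κ) ≥ 2 such that, defining m(k) := min_{i<j ∈ I(k)} dist_H(H_i ∩ B̄_1, H_j ∩ B̄_1), d(k) := max_{i ∈ I(0)} min_{j ∈ I(k)} dist_H(H_i ∩ B̄_1, H_j ∩ B̄_1), and M(k) := max_{i<j ∈ I(k)} dist_H(π_i ∩ B̄_1, π_j ∩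 B̄_1), the following hold: (i) M(κ) = M(0); (ii) η M(κ) ≤ m(κ); (iii) d(k) ≤ δ m(k) and η d(k) ≤ m(k−1) for every 1 ≤ k ≤ κ; (iv) m(k−1) ≤ δ m(k) for every 1 ≤ k ≤ κ. -/
open Metric

/-- `max_{i ∈ I₀} min_{j ∈ I} dist_H (f i ∩ B, f j ∩ B)`. -/
noncomputable def maxMinDist {ι : Type*} {α : Type*} [MetricSpace α]
    (B : Set α) (I₀ I : Finset ι) (f : ι → Set α) : ℝ :=
  sSup {d : ℝ | ∃ i ∈ I₀,
    d = sInf {d' : ℝ | ∃ j ∈ I, d' = Metric.hausdorffDist (f i ∩ B) (f j ∩ B)}}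

open Finset

noncomputable def mfun {N : ℕ} (D : Fin N → Fin N → ℝ) (S : Finset (Fin N)) : ℝ :=
  sInf {d : ℝ | ∃ i ∈ S, ∃ j ∈ S, i ≠ j ∧ d = D i j}

lemma mfun_finite {N : ℕ} (D : Fin N → Fin N → ℝ) (S : Finset (Fin N)) :
    {d : ℝ | ∃ i ∈ S, ∃ j ∈ S, i ≠ j ∧ d = D i j}.Finite := by
  apply Set.Finite.subset (Set.finite_range (fun p : Fin N × Fin N => D p.1 p.2))
  rintro d ⟨i, _, j, _, _, rfl⟩; exact ⟨(i, j), rfl⟩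

lemma mfun_nonneg {N : ℕ} {D : Fin N → Fin N → ℝ} (h : ∀ i j, 0 ≤ D i j) (S : Finset (Fin N)) :
    0 ≤ mfun D S := by
  apply Real.sInf_nonneg
  rintro d ⟨i, _, j, _, _, rfl⟩; exact h i j

lemma mfun_le {N : ℕ} (D : Fin N → Fin N → ℝ) {S : Finset (Fin N)} {i j : Fin N}
    (hi : i ∈ S) (hj : j ∈ S) (hij : i ≠ j) : mfun D S ≤ D i j :=
  csInf_le (mfun_finite D S).bddBelow ⟨i, hi, j, hj, hij, rfl⟩

lemma mfun_mem {N : ℕ} (D : Fin N → Fin N → ℝ) {S : Finset (Fin N)} {a b : Fin N}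
    (ha : a ∈ S) (hb : b ∈ S) (hab : a ≠ b) :
    ∃ i ∈ S, ∃ j ∈ S, i ≠ j ∧ mfun D S = D i j := by
  have h : {d : ℝ | ∃ i ∈ S, ∃ j ∈ S, i ≠ j ∧ d = D i j}.Nonempty :=
    ⟨D a b, a, ha, b, hb, hab, rfl⟩
  exact h.csInf_mem (mfun_finite D S)

lemma exists_gap (P : ℕ) (Vals : Finset ℝ) (hcard : Vals.card ≤ P) (R : ℝ) (hR : 1 < R)
    (m : ℝ) (hm : 0 ≤ m) :
    ∃ t ≤ P, ∀ v ∈ Vals, ¬(m * R ^ t < v ∧ v ≤ m * R ^ (t + 1)) := by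
  by_contra hcon
  push_neg at hcon
  choose! v hv1 hv2 hv3 using hcon
  have hinj : ∀ s ∈ Finset.range (P+1), ∀ t ∈ Finset.range (P+1), s < t → v s < v t := by
    intro s hs t ht hst
    simp only [Finset.mem_range] at hs ht
    have h1 : v s ≤ m * R ^ (s+1) := hv3 s (by omega)
    have h2 : m * R ^ t < v t := hv2 t (by omega)
    have : m * R ^ (s+1) ≤ m * R ^ t :=
      mul_le_mul_of_nonneg_left (pow_le_pow_right₀ hR.le (by omega)) hm
    linarith
  have hcard2 : (Finset.range (P+1)).card ≤ Vals.card := by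
    apply Finset.card_le_card_of_injOn v
    · intro t ht; simp only [Finset.mem_coe, Finset.coe_range, Set.mem_Iio, Finset.mem_range] at ht; exact hv1 t (by omega)
    · intro s hs t ht hst
      by_contra hne
      rcases lt_or_gt_of_ne hne with h | h
      · exact absurd hst (ne_of_lt (hinj s hs t ht h))
      · exact absurd hst.symm (ne_of_lt (hinj t ht s hs h))
  simp at hcard2; omega

lemma exists_maximal_sep {N : ℕ} (S T : Finset (Fin N)) (hTS : T ⊆ S)
    (D : Fin N → Fin N → ℝ) (hsymm : ∀ i j, D i j = D j i) (G : ℝ)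
    (hT : ∀ i ∈ T, ∀ j ∈ T, i ≠ j → G < D i j) :
    ∃ S', T ⊆ S' ∧ S' ⊆ S ∧ (∀ i ∈ S', ∀ j ∈ S', i ≠ j → G < D i j) ∧
      (∀ i ∈ S, i ∉ S' → ∃ j ∈ S', D i j ≤ G) := by
  classical
  set F := S.powerset.filter (fun U => T ⊆ U ∧ ∀ i ∈ U, ∀ j ∈ U, i ≠ j → G < D i j) with hF
  have hTF : T ∈ F := by
    simp only [hF, Finset.mem_filter, Finset.mem_powerset]
    exact ⟨hTS, le_refl _, hT⟩
  obtain ⟨S', hS'F, hmax⟩ := F.exists_max_image Finset.card ⟨T, hTF⟩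
  simp only [hF, Finset.mem_filter, Finset.mem_powerset] at hS'F
  obtain ⟨hS'S, hTS', hsep⟩ := hS'F
  refine ⟨S', hTS', hS'S, hsep, ?_⟩
  intro i hiS hiS'
  by_contra hcon
  push_neg at hcon
  have hins : insert i S' ∈ F := by
    simp only [hF, Finset.mem_filter, Finset.mem_powerset]
    refine ⟨Finset.insert_subset hiS hS'S, hTS'.trans (Finset.subset_insert _ _), ?_⟩
    intro x hx y hy hxy
    rcases Finset.mem_insert.mp hx with rfl | hx' <;>
      rcases Finset.mem_insert.mp hy with rfl | hy'
    · exact absurd rfl hxy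
    · exact hcon y hy'
    · rw [hsymm]; exact hcon x hx'
    · exact hsep x hx' y hy' hxy
  have := hmax _ hins
  rw [Finset.card_insert_of_notMem hiS'] at this
  omega

set_option maxHeartbeats 1000000 in
lemma layer_core {N : ℕ} (hN : 2 ≤ N) (δ : ℝ) (hδ0 : 0 < δ) (hδ1 : δ ≤ 1)
    (D : Fin N → Fin N → ℝ)
    (hsymm : ∀ i j, D i j = D j i)
    (hnonneg : ∀ i j, 0 ≤ D i j)
    (hself : ∀ i, D i i = 0)
    (htri : ∀ i j k, D i k ≤ D i j + D j k)
    (a b : Fin N) (hab : a ≠ b) (M₀ : ℝ) (hM₀0 : 0 ≤ M₀) (hM₀ : M₀ ≤ D a b) :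
    ∃ (κ : ℕ) (I : ℕ → Finset (Fin N)),
      I 0 = Finset.univ ∧
      (∀ k < κ, I (k + 1) ⊂ I k) ∧
      a ∈ I κ ∧ b ∈ I κ ∧
      (δ / 3) ^ (N * N + 1) * M₀ ≤ mfun D (I κ) ∧
      (∀ k, 1 ≤ k → k ≤ κ →
        (∀ i, ∃ j ∈ I k, D i j ≤ δ * mfun D (I k) ∧
          (δ / 3) ^ (N * N + 1) * D i j ≤ mfun D (I (k - 1))) ∧
        mfun D (I (k - 1)) ≤ δ * mfun D (I k)) := by
  classical
  set P := N * N with hP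
  clear_value P
  set η := (δ / 3) ^ (P + 1) with hηdef
  have hη0 : 0 < η := pow_pos (by positivity) _
  have hR1 : (1 : ℝ) < 3 / δ := by rw [lt_div_iff₀ hδ0]; linarith
  have hηR : η * (3 / δ) ^ P = δ / 3 := by
    rw [hηdef, pow_succ, mul_comm ((δ/3)^P), mul_assoc, ← mul_pow]
    rw [div_mul_div_comm]
    have h3 : δ * 3 / (3 * δ) = 1 := by field_simp
    rw [h3, one_pow, mul_one]
  clear_value η
  have key : ∀ (n : ℕ) (S : Finset (Fin N)), S.card ≤ n → a ∈ S → b ∈ S →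
      (∀ i, ∃ j ∈ S, D i j ≤ δ * mfun D S) →
      ∃ (κ : ℕ) (I : ℕ → Finset (Fin N)),
        I 0 = S ∧ (∀ k < κ, I (k + 1) ⊂ I k) ∧ a ∈ I κ ∧ b ∈ I κ ∧
        η * M₀ ≤ mfun D (I κ) ∧
        (∀ k, 1 ≤ k → k ≤ κ →
          (∀ i, ∃ j ∈ I k, D i j ≤ δ * mfun D (I k) ∧ η * D i j ≤ mfun D (I (k - 1))) ∧
          mfun D (I (k - 1)) ≤ δ * mfun D (I k)) := by
    intro n
    induction n with
    | zero =>
      intro S hc haS _ _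
      rw [Nat.le_zero, Finset.card_eq_zero] at hc
      subst hc; simp at haS
    | succ n ih =>
      intro S hcard haS hbS hinv
      by_cases hstop : η * M₀ ≤ mfun D S
      · exact ⟨0, fun _ => S, rfl, by omega, haS, hbS, hstop, by intro k h1 h2; omega⟩
      push_neg at hstop
      have hm0 : 0 ≤ mfun D S := mfun_nonneg hnonneg S
      set m := mfun D S with hmdef
      clear_value m
      have hM0pos : 0 < M₀ := by nlinarith
      -- pigeonhole for a gap
      set Vals : Finset ℝ := (S ×ˢ S).image (fun p => D p.1 p.2) with hVals
      have hValsCard : Vals.card ≤ P := by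
        calc Vals.card ≤ (S ×ˢ S).card := Finset.card_image_le
        _ = S.card * S.card := Finset.card_product S S
        _ ≤ N * N := by
            have := S.card_le_univ
            simp only [Finset.card_univ, Fintype.card_fin] at this
            exact Nat.mul_le_mul this this
        _ = P := hP.symm
      clear_value Vals
      obtain ⟨t, htP, hgap⟩ := exists_gap P Vals hValsCard (3 / δ) hR1 m hm0
      set G := m * (3 / δ) ^ t with hGdef
      have hRt0 : (0:ℝ) < (3 / δ) ^ t := pow_pos (by positivity) _
      have hG0 : 0 ≤ G := mul_nonneg hm0 hRt0.le
      have hmG : m ≤ G := le_mul_of_one_le_right hm0 (one_le_pow₀ hR1.le)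
      have hGleP : G ≤ m * (3 / δ) ^ P :=
        mul_le_mul_of_nonneg_left (pow_le_pow_right₀ hR1.le htP) hm0
      have hGM : G < (δ / 3) * M₀ := by
        have h1 : m * (3 / δ) ^ P < (η * M₀) * (3 / δ) ^ P :=
          mul_lt_mul_of_pos_right hstop (pow_pos (by positivity) _)
        have h2 : (η * M₀) * (3 / δ) ^ P = (δ / 3) * M₀ := by
          rw [mul_comm η M₀, mul_assoc, hηR]; ring
        linarith
      clear_value G
      have hGab : G < D a b := by
        have : (δ / 3) * M₀ ≤ M₀ := by nlinarith
        linarith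
      -- maximal separated subset containing a, b
      have hTsep : ∀ i ∈ ({a, b} : Finset (Fin N)), ∀ j ∈ ({a, b} : Finset (Fin N)),
          i ≠ j → G < D i j := by
        intro i hi j hj hij
        simp only [Finset.mem_insert, Finset.mem_singleton] at hi hj
        rcases hi with rfl | rfl <;> rcases hj with rfl | rfl
        · exact absurd rfl hij
        · exact hGab
        · rw [hsymm]; exact hGab
        · exact absurd rfl hij
      obtain ⟨S', hTS', hS'S, hsep, hnear⟩ := exists_maximal_sep S {a, b}
        (by intro x hx; simp only [Finset.mem_insert, Finset.mem_singleton] at hx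
            rcases hx with rfl | rfl; exacts [haS, hbS])
        D hsymm G hTsep
      have haS' : a ∈ S' := hTS' (Finset.mem_insert_self a _)
      have hbS' : b ∈ S' := hTS' (by simp)
      -- min separation of S' jumped across the gap
      set m' := mfun D S' with hm'def
      have hm'0 : 0 ≤ m' := mfun_nonneg hnonneg S'
      clear_value m'
      have hm'big : m * (3 / δ) ^ (t + 1) < m' := by
        obtain ⟨i, hi, j, hj, hij, heq⟩ := mfun_mem D haS' hbS' hab
        have hmem : D i j ∈ Vals := by
          rw [hVals]; exact Finset.mem_image.mpr ⟨(i, j),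
            Finset.mem_product.mpr ⟨hS'S hi, hS'S hj⟩, rfl⟩
        have hGlt : G < D i j := hsep i hi j hj hij
        have := hgap _ hmem
        rw [hm'def, heq]
        by_contra hle
        push_neg at hle
        exact this ⟨hGlt, hle⟩
      have h3G : 3 * G < δ * m' := by
        have e1 : m * (3 / δ) ^ (t + 1) = G * (3 / δ) := by rw [hGdef, pow_succ]; ring
        have e2 : δ * (G * (3 / δ)) = 3 * G := by field_simp
        nlinarith
      -- S' is a strict subset of S
      have hssub : S' ⊂ S := by
        rw [Finset.ssubset_iff_of_subset hS'S]
        obtain ⟨i0, hi0, j0, hj0, hij0, heq0⟩ := mfun_mem D haS hbS hab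
        by_contra hcon
        push_neg at hcon
        have := hsep i0 (hcon i0 hi0) j0 (hcon j0 hj0) hij0
        rw [← heq0] at this
        linarith
      -- nearness of every index to S'
      have hinv' : ∀ i, ∃ j ∈ S', D i j ≤ 2 * G := by
        intro i
        obtain ⟨j, hjS, hji⟩ := hinv i
        have hjG : D i j ≤ G := by
          have : δ * m ≤ m := by nlinarith
          linarith
        by_cases hjS' : j ∈ S'
        · exact ⟨j, hjS', by linarith⟩
        · obtain ⟨j', hj'S', hjj'⟩ := hnear j hjS hjS'
          exact ⟨j', hj'S', le_trans (htri i j j') (by linarith)⟩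
      have h2G : 2 * G < δ * m' := by linarith
      -- apply the induction hypothesis
      have hcard' : S'.card ≤ n := by
        have := Finset.card_lt_card hssub
        omega
      obtain ⟨κ', I', hI'0, hI'mono, haI', hbI', hI'fin, hI'cond⟩ := ih S' hcard' haS' hbS'
        (by rw [← hm'def]
            intro i
            obtain ⟨j, hjS', hj2G⟩ := hinv' i
            exact ⟨j, hjS', le_trans hj2G h2G.le⟩)
      refine ⟨κ' + 1, fun k => if k = 0 then S else I' (k - 1), by simp, ?_, ?_, ?_, ?_, ?_⟩
      · intro k hk
        rcases k with _ | j
        · simpa [hI'0] using hssub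
        · simpa using hI'mono j (by omega)
      · simpa using haI'
      · simpa using hbI'
      · simpa using hI'fin
      · intro k hk1 hk2
        rcases k with _ | j
        · omega
        rcases j with _ | j
        · -- k = 1 : relation between S and S'
          simp only [Nat.sub_self, if_pos rfl, if_neg (Nat.one_ne_zero), if_true]
          rw [hI'0, ← hm'def, ← hmdef]
          constructor
          · intro i
            obtain ⟨j, hjS', hj2G⟩ := hinv' i
            refine ⟨j, hjS', le_trans hj2G h2G.le, ?_⟩
            have hη2G : η * (2 * G) ≤ m := by
              have h1 : η * G ≤ η * (m * (3 / δ) ^ P) :=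
                mul_le_mul_of_nonneg_left hGleP hη0.le
              have h2 : η * (m * (3 / δ) ^ P) = (δ / 3) * m := by
                rw [← mul_assoc, mul_comm η m, mul_assoc, hηR]; ring
              have h3 : δ * m ≤ m := by nlinarith
              linarith
            have h4 : η * D i j ≤ η * (2 * G) :=
              mul_le_mul_of_nonneg_left hj2G hη0.le
            linarith
          · -- m ≤ δ * m'
            linarith
        · -- k = j + 2 : use inner conditions
          have hcond := hI'cond (j + 1) (by omega) (by omega)
          simp only [Nat.add_sub_cancel] at hcond ⊢
          simpa using hcond
  -- conclude from S = univ
  obtain ⟨κ, I, hI0, hImono, haI, hbI, hIfin, hIcond⟩ := key N Finset.univ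
    (by simp) (Finset.mem_univ a) (Finset.mem_univ b)
    (by intro i
        exact ⟨i, Finset.mem_univ i, by
          rw [hself i]
          exact mul_nonneg hδ0.le (mfun_nonneg hnonneg _)⟩)
  exact ⟨κ, I, hI0, hImono, haI, hbI, hIfin, hIcond⟩

set_option maxHeartbeats 1000000 in
/-- **Layer subdivision lemma.** -/
theorem layer_subdivision (N q : ℕ) (hN : 2 ≤ N) (hNq : N ≤ q)
    (δ : ℝ) (hδ0 : 0 < δ) (hδ1 : δ ≤ 1) :
    ∃ η : ℝ, 0 < η ∧
      ∀ (m n : ℕ), 1 ≤ m →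
      ∀ (V : Submodule ℝ (EuclideanSpace ℝ (Fin (m + n)))),
        Module.finrank ℝ V = m - 1 →
      ∀ (e : Fin N → EuclideanSpace ℝ (Fin (m + n))),
        (∀ i, e i ≠ 0) →
        (∀ i, ∀ v ∈ V, (inner ℝ (e i) v : ℝ) = 0) →
      ∀ (H pl : Fin N → Set (EuclideanSpace ℝ (Fin (m + n)))),
        (∀ i, H i = {x | ∃ v ∈ V, ∃ t : ℝ, 0 ≤ t ∧ x = v + t • e i}) →
        (∀ i, pl i = {x | ∃ v ∈ V, ∃ t : ℝ, x = v + t • e i}) →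
        (∀ i j, i ≠ j → H i ≠ H j) →
      ∃ (κ : ℕ) (I : ℕ → Finset (Fin N)),
        I 0 = Finset.univ ∧
        (∀ k < κ, I (k + 1) ⊂ I k) ∧
        2 ≤ (I κ).card ∧
        maxSep (closedBall 0 1) (I κ) pl = maxSep (closedBall 0 1) (I 0) pl ∧
        η * maxSep (closedBall 0 1) (I κ) pl ≤ minSep (closedBall 0 1) (I κ) H ∧
        (∀ k, 1 ≤ k → k ≤ κ →
          maxMinDist (closedBall 0 1) (I 0) (I k) H ≤ δ * minSep (closedBall 0 1) (I k) H ∧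
          η * maxMinDist (closedBall 0 1) (I 0) (I k) H ≤ minSep (closedBall 0 1) (I (k - 1)) H ∧
          minSep (closedBall 0 1) (I (k - 1)) H ≤ δ * minSep (closedBall 0 1) (I k) H) := by
  have hη0 : (0:ℝ) < (δ / 3) ^ (N * N + 1) := pow_pos (by positivity) _
  refine ⟨(δ / 3) ^ (N * N + 1), hη0, ?_⟩
  intro m n hm V hV e he0 heV H pl hH hpl hHne
  set B : Set (EuclideanSpace ℝ (Fin (m + n))) := closedBall 0 1 with hB
  set DH : Fin N → Fin N → ℝ := fun i j => hausdorffDist (H i ∩ B) (H j ∩ B) with hDH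
  set DP : Fin N → Fin N → ℝ := fun i j => hausdorffDist (pl i ∩ B) (pl j ∩ B) with hDP
  -- basic facts about the sets
  have hne : ∀ i, (H i ∩ B).Nonempty := by
    intro i
    refine ⟨0, ?_, mem_closedBall_self zero_le_one⟩
    rw [hH i]
    exact ⟨0, V.zero_mem, 0, le_refl 0, by simp⟩
  have hbd : ∀ i, Bornology.IsBounded (H i ∩ B) := fun i =>
    Metric.isBounded_closedBall.subset Set.inter_subset_right
  have hEdist : ∀ i j, EMetric.hausdorffEdist (H i ∩ B) (H j ∩ B) ≠ ⊤ := fun i j =>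
    hausdorffEdist_ne_top_of_nonempty_of_bounded (hne i) (hne j) (hbd i) (hbd j)
  have hsymm : ∀ i j, DH i j = DH j i := fun i j => hausdorffDist_comm
  have hnonneg : ∀ i j, 0 ≤ DH i j := fun i j => hausdorffDist_nonneg
  have hself : ∀ i, DH i i = 0 := fun i => hausdorffDist_self_zero
  have htri : ∀ i j k, DH i k ≤ DH i j + DH j k := fun i j k =>
    hausdorffDist_triangle (hEdist i j)
  -- the reflection across V
  have heV' : ∀ i, e i ∈ Vᗮ := fun i => (Submodule.mem_orthogonal V (e i)).mpr
    (fun u hu => by rw [real_inner_comm]; exact heV i u hu)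
  have hRe : ∀ (i : Fin N) (w : EuclideanSpace ℝ (Fin (m + n))) (_ : w ∈ V) (s : ℝ),
      V.reflection (w + s • e i) = w - s • e i := by
    intro i w hw s
    rw [map_add, map_smul, Submodule.reflection_mem_subspace_eq_self hw,
      Submodule.reflection_mem_subspace_orthogonalComplement_eq_neg (heV' i), smul_neg, ← sub_eq_add_neg]
  -- comparison of plane distance with half-plane distance
  have hhalf : ∀ i j (r : ℝ), DH i j < r → ∀ x ∈ pl i ∩ B, ∃ y ∈ pl j ∩ B, dist x y ≤ r := by
    intro i j r hr x hx
    obtain ⟨hxpl, hxB⟩ := hx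
    rw [hpl i] at hxpl
    obtain ⟨v, hv, t, rfl⟩ := hxpl
    rcases le_or_gt 0 t with ht | ht
    · have hxH : v + t • e i ∈ H i ∩ B := ⟨by rw [hH i]; exact ⟨v, hv, t, ht, rfl⟩, hxB⟩
      obtain ⟨y, hy, hxy⟩ := exists_dist_lt_of_hausdorffDist_lt hxH hr (hEdist i j)
      obtain ⟨hyH, hyB⟩ := hy
      rw [hH j] at hyH
      obtain ⟨w, hw, s, hs, rfl⟩ := hyH
      exact ⟨w + s • e j, ⟨by rw [hpl j]; exact ⟨w, hw, s, rfl⟩, hyB⟩, hxy.le⟩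
    · have hx'B : v + (-t) • e i ∈ B := by
        have hxx : v + (-t) • e i = V.reflection (v + t • e i) := by
          rw [hRe i v hv t, neg_smul, ← sub_eq_add_neg]
        rw [hB, mem_closedBall_zero_iff] at hxB ⊢
        rw [hxx, LinearIsometryEquiv.norm_map]
        exact hxB
      have hx'H : v + (-t) • e i ∈ H i ∩ B :=
        ⟨by rw [hH i]; exact ⟨v, hv, -t, by linarith, rfl⟩, hx'B⟩
      obtain ⟨y, hy, hxy⟩ := exists_dist_lt_of_hausdorffDist_lt hx'H hr (hEdist i j)
      obtain ⟨hyH, hyB⟩ := hy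
      rw [hH j] at hyH
      obtain ⟨w, hw, s, hs, rfl⟩ := hyH
      have e2 : w + (-s) • e j = V.reflection (w + s • e j) := by
        rw [hRe j w hw s, neg_smul, ← sub_eq_add_neg]
      refine ⟨w + (-s) • e j, ⟨by rw [hpl j]; exact ⟨w, hw, -s, rfl⟩, ?_⟩, ?_⟩
      · rw [hB, mem_closedBall_zero_iff] at hyB ⊢
        rw [e2, LinearIsometryEquiv.norm_map]
        exact hyB
      · have e1 : v + t • e i = V.reflection (v + (-t) • e i) := by
          rw [hRe i v hv (-t), neg_smul, sub_neg_eq_add]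
        rw [e1, e2, LinearIsometryEquiv.dist_map]
        exact hxy.le
  have hPD : ∀ i j, DP i j ≤ DH i j := by
    intro i j
    refine le_of_forall_pos_le_add ?_
    intro ε hε
    have hcomm : DH j i = DH i j := hsymm j i
    refine hausdorffDist_le_of_mem_dist (add_nonneg (hnonneg i j) hε.le) ?_ ?_
    · exact hhalf i j _ (lt_add_of_pos_right _ hε)
    · intro y hy
      obtain ⟨x, hx, hxy⟩ := hhalf j i _ (by rw [hcomm]; exact lt_add_of_pos_right _ hε) y hy
      exact ⟨x, hx, hxy⟩
  -- pick a pair attaining the maximal plane separation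
  have hi01 : (⟨0, by omega⟩ : Fin N) ≠ ⟨1, by omega⟩ := by simp [Fin.ext_iff]
  have hMne : {d : ℝ | ∃ i ∈ Finset.univ, ∃ j ∈ Finset.univ, i ≠ j ∧ d = DP i j}.Nonempty :=
    ⟨DP ⟨0, by omega⟩ ⟨1, by omega⟩, ⟨0, by omega⟩, Finset.mem_univ _, ⟨1, by omega⟩,
      Finset.mem_univ _, hi01, rfl⟩
  obtain ⟨aa, -, bb, -, habb, hMeq⟩ :
      ∃ i ∈ Finset.univ, ∃ j ∈ Finset.univ, i ≠ j ∧
        maxSep B Finset.univ pl = DP i j :=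
    hMne.csSup_mem (mfun_finite DP Finset.univ)
  have hM0nonneg : 0 ≤ maxSep B Finset.univ pl := by rw [hMeq]; exact hausdorffDist_nonneg
  have hM0le : maxSep B Finset.univ pl ≤ DH aa bb := hMeq ▸ hPD aa bb
  -- apply the combinatorial core lemma
  obtain ⟨κ, I, hI0, hImono, haI, hbI, hIfin, hIcond⟩ :=
    layer_core hN δ hδ0 hδ1 DH hsymm hnonneg hself htri aa bb habb
      (maxSep B Finset.univ pl) hM0nonneg hM0le
  have hminEq : ∀ S, minSep B S H = mfun DH S := fun S => rfl
  have hfin2 : ∀ (i : Fin N) (S : Finset (Fin N)), {d' : ℝ | ∃ j ∈ S, d' = DH i j}.Finite :=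
    fun i S => Set.Finite.subset (Set.finite_range (fun j => DH i j))
      (by rintro d ⟨j, -, rfl⟩; exact ⟨j, rfl⟩)
  -- max separations agree
  have hle1 : maxSep B (I κ) pl ≤ maxSep B Finset.univ pl := by
    refine csSup_le ⟨DP aa bb, aa, haI, bb, hbI, habb, rfl⟩ ?_
    rintro d ⟨i, -, j, -, hij, rfl⟩
    exact le_csSup (mfun_finite DP Finset.univ).bddAbove
      ⟨i, Finset.mem_univ _, j, Finset.mem_univ _, hij, rfl⟩
  have hle2 : maxSep B Finset.univ pl ≤ maxSep B (I κ) pl := by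
    rw [hMeq]
    exact le_csSup (mfun_finite DP (I κ)).bddAbove ⟨aa, haI, bb, hbI, habb, rfl⟩
  have hmaxeq : maxSep B (I κ) pl = maxSep B Finset.univ pl := le_antisymm hle1 hle2
  refine ⟨κ, I, hI0, hImono, Finset.one_lt_card.mpr ⟨aa, haI, bb, hbI, habb⟩,
    by rw [hI0]; exact hmaxeq, ?_, ?_⟩
  · rw [hmaxeq, hminEq (I κ)]
    exact hIfin
  · intro k hk1 hk2
    obtain ⟨h1, h2⟩ := hIcond k hk1 hk2
    have houter : {d : ℝ | ∃ i ∈ I 0,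
        d = sInf {d' : ℝ | ∃ j ∈ I k, d' = hausdorffDist (H i ∩ B) (H j ∩ B)}}.Nonempty :=
      ⟨_, aa, by rw [hI0]; exact Finset.mem_univ aa, rfl⟩
    refine ⟨?_, ?_, ?_⟩
    · refine csSup_le houter ?_
      rintro d ⟨i, -, rfl⟩
      obtain ⟨j, hjk, hj1, hj2⟩ := h1 i
      calc sInf {d' : ℝ | ∃ j ∈ I k, d' = hausdorffDist (H i ∩ B) (H j ∩ B)}
          ≤ DH i j := csInf_le (hfin2 i (I k)).bddBelow ⟨j, hjk, rfl⟩
        _ ≤ δ * mfun DH (I k) := hj1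
        _ = δ * minSep B (I k) H := by rw [hminEq]
    · have hb : maxMinDist B (I 0) (I k) H ≤ mfun DH (I (k - 1)) / (δ / 3) ^ (N * N + 1) := by
        refine csSup_le houter ?_
        rintro d ⟨i, -, rfl⟩
        obtain ⟨j, hjk, hj1, hj2⟩ := h1 i
        have hDij : DH i j ≤ mfun DH (I (k - 1)) / (δ / 3) ^ (N * N + 1) :=
          (le_div_iff₀ hη0).mpr (by rw [mul_comm]; exact hj2)
        exact le_trans (csInf_le (hfin2 i (I k)).bddBelow ⟨j, hjk, rfl⟩) hDij
      have hmul := mul_le_mul_of_nonneg_left hb hη0.le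
      have heq : (δ / 3) ^ (N * N + 1) * (mfun DH (I (k - 1)) / (δ / 3) ^ (N * N + 1))
          = mfun DH (I (k - 1)) := by field_simp
      rw [heq] at hmul
      rw [hminEq]
      exact hmul
    · rw [hminEq, hminEq]
      exact h2
end

section
/- Let m ≥ 1 be an integer. Suppose H : (0,1] → (0,∞) is differentiable, I : (0,1] → ℝ is nondecreasing, and for every r ∈ (0,1] one has (d/dr) log( H(r) / r^{m−1} ) = 2 I(r) / r. Then for all 0 < s ≤ t ≤ 1, H(s)/s^{m−1} ≤ (s/t)^{2 I(s)} · H(t)/t^{m−1}. -/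
open Set

theorem stmt3 (m : ℕ) (hm : 1 ≤ m) (H I : ℝ → ℝ)
    (hHpos : ∀ r ∈ Ioc (0 : ℝ) 1, 0 < H r)
    (hImono : MonotoneOn I (Ioc (0 : ℝ) 1))
    (hderiv : ∀ r ∈ Ioc (0 : ℝ) 1,
      HasDerivAt (fun ρ : ℝ => Real.log (H ρ / ρ ^ (m - 1))) (2 * I r / r) r) :
    ∀ s t : ℝ, 0 < s → s ≤ t → t ≤ 1 →
      H s / s ^ (m - 1) ≤ (s / t) ^ (2 * I s) * (H t / t ^ (m - 1)) := by
  intro s t hs hst ht1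
  have hsI : s ∈ Ioc (0 : ℝ) 1 := ⟨hs, hst.trans ht1⟩
  have ht : (0 : ℝ) < t := hs.trans_le hst
  have htI : t ∈ Ioc (0 : ℝ) 1 := ⟨ht, ht1⟩
  set c := 2 * I s with hc
  set g : ℝ → ℝ := fun ρ => Real.log (H ρ / ρ ^ (m - 1)) - c * Real.log ρ with hg
  have hsub : Icc s t ⊆ Ioc (0 : ℝ) 1 := fun x hx => ⟨hs.trans_le hx.1, hx.2.trans ht1⟩
  have key : ∀ r ∈ Ioc (0 : ℝ) 1, HasDerivAt g (2 * I r / r - c / r) r := by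
    intro r hr
    have h1 := hderiv r hr
    have h2 := (Real.hasDerivAt_log hr.1.ne').const_mul c
    have := h1.sub h2
    exact this.congr_deriv (by ring)
  have hmono : MonotoneOn g (Icc s t) := by
    apply monotoneOn_of_deriv_nonneg (convex_Icc s t)
    · exact fun x hx => (key x (hsub hx)).continuousAt.continuousWithinAt
    · intro x hx
      rw [interior_Icc] at hx
      exact ((key x (hsub (Ioo_subset_Icc_self hx))).differentiableAt).differentiableWithinAt
    · intro x hx
      rw [interior_Icc] at hx
      have hxI : x ∈ Ioc (0 : ℝ) 1 := hsub (Ioo_subset_Icc_self hx)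
      rw [(key x hxI).deriv]
      have hIx : I s ≤ I x := hImono hsI hxI hx.1.le
      have hx0 : (0 : ℝ) < x := hxI.1
      rw [sub_nonneg, hc]
      exact div_le_div_of_nonneg_right (by linarith) hx0.le
  have hgst : g s ≤ g t := hmono ⟨le_refl s, hst⟩ ⟨hst, le_refl t⟩ hst
  have hfs : 0 < H s / s ^ (m - 1) := div_pos (hHpos s hsI) (pow_pos hs _)
  have hft : 0 < H t / t ^ (m - 1) := div_pos (hHpos t htI) (pow_pos ht _)
  have hlog : Real.log (H s / s ^ (m - 1)) ≤
      c * Real.log (s / t) + Real.log (H t / t ^ (m - 1)) := by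
    have := hgst
    simp only [hg, Real.log_div hs.ne' ht.ne'] at this ⊢
    nlinarith [this]
  have := Real.exp_le_exp.mpr hlog
  rw [Real.exp_log hfs, Real.exp_add, Real.exp_log hft] at this
  rwa [Real.rpow_def_of_pos (div_pos hs ht), mul_comm (Real.log (s / t)) c]
end

section
/- For every integer m ≥ 1 and every μ ∈ (0,1] there exists a constant C = C(m, μ) > 0 with the following property. For every Lebesgue-measurable set E ⊆ B_1 ⊂ ℝ^m with ℒ^m(E) ≥ μ ℒ^m(B_1), there exist vectors v_1, …, v_m ∈ E forming a basis of ℝ^m such that every v ∈ B_1 can be written as v = ∑_{i=1}^m λ_i v_i with |λ_i| ≤ C for all i. -/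
open Metric MeasureTheory
open scoped ENNReal

namespace Stmt13Aux

noncomputable def slab (m : ℕ) (u : EuclideanSpace ℝ (Fin m)) (ε : ℝ) :
    Set (EuclideanSpace ℝ (Fin m)) :=
  ball (0 : EuclideanSpace ℝ (Fin m)) 1 ∩ {x | |(inner ℝ x u : ℝ)| ≤ ε}

lemma measurableSet_slab {m : ℕ} (u : EuclideanSpace ℝ (Fin m)) (ε : ℝ) :
    MeasurableSet (slab m u ε) :=
  measurableSet_ball.inter
    ((isClosed_le ((continuous_id.inner continuous_const).abs) continuous_const).measurableSet)

lemma slab_subset {m : ℕ} (u : EuclideanSpace ℝ (Fin m)) (ε : ℝ) :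
    slab m u ε ⊆ ball (0 : EuclideanSpace ℝ (Fin m)) 1 := Set.inter_subset_left

lemma volume_slab_eq {m : ℕ} (hm : 1 ≤ m) (u : EuclideanSpace ℝ (Fin m)) (hu : ‖u‖ = 1)
    (ε : ℝ) :
    volume (slab m u ε) = volume (slab m (EuclideanSpace.single (⟨0, hm⟩ : Fin m) 1) ε) := by
  set i₀ : Fin m := ⟨0, hm⟩
  have hcard : Module.finrank ℝ (EuclideanSpace ℝ (Fin m)) = Fintype.card (Fin m) :=
    finrank_euclideanSpace
  have horth : Orthonormal ℝ (({i₀} : Set (Fin m)).restrict (fun _ => u)) := by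
    constructor
    · intro i; exact hu
    · intro i j hij
      exact absurd (Subsingleton.elim i j) hij
  obtain ⟨b, hb⟩ := horth.exists_orthonormalBasis_extension_of_card_eq hcard
  have hbu : b i₀ = u := hb i₀ rfl
  have hpre : slab m u ε = b.repr ⁻¹' slab m (EuclideanSpace.single i₀ 1) ε := by
    ext x
    simp only [slab, Set.mem_inter_iff, Set.mem_preimage, Set.mem_setOf_eq,
      mem_ball_zero_iff]
    have h1 : ‖b.repr x‖ = ‖x‖ := b.repr.norm_map x
    have h2 : (inner ℝ (b.repr x) (EuclideanSpace.single i₀ (1:ℝ)) : ℝ) = (inner ℝ x u : ℝ) := by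
      rw [← b.repr_self i₀, b.repr.inner_map_map, hbu]
    rw [h1, h2]
  rw [hpre, b.measurePreserving_repr.measure_preimage
    (measurableSet_slab _ _).nullMeasurableSet]

lemma exists_eps {m : ℕ} (hm : 1 ≤ m) {μ : ℝ} (hμ : 0 < μ) :
    ∃ ε : ℝ, 0 < ε ∧ ∀ u : EuclideanSpace ℝ (Fin m), ‖u‖ = 1 →
      volume (slab m u ε) <
        ENNReal.ofReal μ * volume (ball (0 : EuclideanSpace ℝ (Fin m)) 1) := by
  set i₀ : Fin m := ⟨0, hm⟩
  set e₀ : EuclideanSpace ℝ (Fin m) := EuclideanSpace.single i₀ 1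
  set T : ℝ≥0∞ := ENNReal.ofReal μ * volume (ball (0 : EuclideanSpace ℝ (Fin m)) 1) with hT
  have hTpos : 0 < T := by
    apply ENNReal.mul_pos
    · simpa using (ENNReal.ofReal_pos.2 hμ).ne'
    · exact (measure_ball_pos volume (0 : EuclideanSpace ℝ (Fin m)) one_pos).ne'
  suffices h : ∃ ε : ℝ, 0 < ε ∧ volume (slab m e₀ ε) < T by
    obtain ⟨ε, hε, hlt⟩ := h
    exact ⟨ε, hε, fun u hu => by rw [volume_slab_eq hm u hu]; exact hlt⟩
  set s : ℕ → Set (EuclideanSpace ℝ (Fin m)) := fun n => slab m e₀ ((n : ℝ) + 1)⁻¹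
  have hanti : Antitone s := by
    intro a b hab x hx
    have hx2 : |(inner ℝ x e₀ : ℝ)| ≤ ((b : ℝ) + 1)⁻¹ := hx.2
    refine ⟨hx.1, ?_⟩
    have hab' : (a : ℝ) + 1 ≤ (b : ℝ) + 1 := by
      have : (a:ℝ) ≤ (b:ℝ) := by exact_mod_cast hab
      linarith
    exact le_trans hx2 (inv_anti₀ (by positivity) hab')
  have hiInter : volume (⋂ n, s n) = 0 := by
    have hsub : (⋂ n, s n) ⊆
        (LinearMap.ker (ContinuousLinearMap.toLinearMap (EuclideanSpace.proj i₀ : EuclideanSpace ℝ (Fin m) →L[ℝ] ℝ)) :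
          Submodule ℝ (EuclideanSpace ℝ (Fin m))) := by
      intro x hx
      simp only [Set.mem_iInter] at hx
      have hx0 : (inner ℝ x e₀ : ℝ) = 0 := by
        by_contra h0
        obtain ⟨n, hn⟩ := exists_nat_one_div_lt (abs_pos.2 h0)
        have := (hx n).2
        rw [one_div] at hn
        exact absurd this (not_le.2 hn)
      have hxe : (inner ℝ x e₀ : ℝ) = x i₀ := by
        show (inner ℝ x (EuclideanSpace.single i₀ (1:ℝ)) : ℝ) = x i₀
        rw [EuclideanSpace.inner_single_right]
        simp
      have : x i₀ = 0 := by rw [← hxe]; exact hx0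
      simpa [LinearMap.mem_ker, EuclideanSpace.proj] using this
    refine measure_mono_null hsub (Measure.addHaar_submodule _ _ ?_)
    intro htop
    have h1 : (EuclideanSpace.proj i₀ : EuclideanSpace ℝ (Fin m) →L[ℝ] ℝ) e₀ = 0 := by
      have : e₀ ∈ LinearMap.ker (ContinuousLinearMap.toLinearMap (EuclideanSpace.proj i₀ :
          EuclideanSpace ℝ (Fin m) →L[ℝ] ℝ)) := by rw [htop]; trivial
      simpa [LinearMap.mem_ker] using this
    have h2 : e₀ i₀ = 1 := by simp [e₀, EuclideanSpace.single_apply]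
    rw [show (EuclideanSpace.proj i₀ : EuclideanSpace ℝ (Fin m) →L[ℝ] ℝ) e₀ = e₀ i₀ from rfl, h2] at h1
    exact one_ne_zero h1
  have htend : Filter.Tendsto (volume ∘ s) Filter.atTop (nhds 0) := by
    rw [← hiInter]
    exact tendsto_measure_iInter_atTop
      (fun n => (measurableSet_slab _ _).nullMeasurableSet) hanti
      ⟨0, (lt_of_le_of_lt (measure_mono (slab_subset _ _)) measure_ball_lt_top).ne⟩
  have hev : ∀ᶠ n in Filter.atTop, (volume ∘ s) n < T :=
    htend.eventually_lt_const hTpos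
  obtain ⟨n, hn⟩ := hev.exists
  exact ⟨((n : ℝ) + 1)⁻¹, by positivity, hn⟩

lemma exists_far {m : ℕ} {ε : ℝ} (hε : 0 < ε)
    (E : Set (EuclideanSpace ℝ (Fin m)))
    (hEb : E ⊆ ball (0 : EuclideanSpace ℝ (Fin m)) 1)
    (hslab : ∀ u : EuclideanSpace ℝ (Fin m), ‖u‖ = 1 → volume (slab m u ε) < volume E)
    (S : Submodule ℝ (EuclideanSpace ℝ (Fin m))) (hS : S ≠ ⊤) :
    ∃ x ∈ E, ∀ s ∈ S, ε ≤ ‖x - s‖ := by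
  by_contra h
  push_neg at h
  have hbot : Sᗮ ≠ ⊥ := fun hb => hS (Submodule.orthogonal_eq_bot_iff.1 hb)
  obtain ⟨u', hu'S, hu'⟩ := Submodule.exists_mem_ne_zero_of_ne_bot hbot
  set u := ‖u'‖⁻¹ • u' with hu_def
  have hu1 : ‖u‖ = 1 := norm_smul_inv_norm hu'
  have huS : u ∈ Sᗮ := Submodule.smul_mem _ _ hu'S
  have hEsub : E ⊆ slab m u ε := by
    intro x hx
    obtain ⟨s, hsS, hlt⟩ := h x hx
    refine ⟨hEb hx, ?_⟩
    have h0 : (inner ℝ s u : ℝ) = 0 := (Submodule.mem_orthogonal _ _).1 huS s hsS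
    have hxi : (inner ℝ x u : ℝ) = (inner ℝ (x - s) u : ℝ) := by
      rw [inner_sub_left, h0]; ring
    show |(inner ℝ x u : ℝ)| ≤ ε
    rw [hxi]
    calc |(inner ℝ (x - s) u : ℝ)| ≤ ‖x - s‖ * ‖u‖ := abs_real_inner_le_norm _ _
    _ = ‖x - s‖ := by rw [hu1, mul_one]
    _ ≤ ε := hlt.le
  exact absurd (measure_mono hEsub) (not_le.2 (hslab u hu1))

end Stmt13Aux

theorem stmt13 (m : ℕ) (hm : 1 ≤ m) (μ : ℝ) (hμ : μ ∈ Set.Ioc (0 : ℝ) 1) :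
    ∃ C : ℝ, 0 < C ∧
      ∀ E : Set (EuclideanSpace ℝ (Fin m)), MeasurableSet E →
        E ⊆ ball (0 : EuclideanSpace ℝ (Fin m)) 1 →
        ENNReal.ofReal μ * volume (ball (0 : EuclideanSpace ℝ (Fin m)) 1) ≤ volume E →
        ∃ v : Fin m → EuclideanSpace ℝ (Fin m),
          (∀ i, v i ∈ E) ∧ LinearIndependent ℝ v ∧
          ∀ w ∈ ball (0 : EuclideanSpace ℝ (Fin m)) 1,
            ∃ lam : Fin m → ℝ, (∀ i, |lam i| ≤ C) ∧ w = ∑ i, lam i • v i := by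
  obtain ⟨hμ0, hμ1⟩ := hμ
  obtain ⟨ε, hε, hslab⟩ := Stmt13Aux.exists_eps hm hμ0
  refine ⟨ε⁻¹ * (1 + ε⁻¹) ^ m, by positivity, ?_⟩
  intro E hEmeas hEb hEvol
  have hslabE : ∀ u : EuclideanSpace ℝ (Fin m), ‖u‖ = 1 →
      volume (Stmt13Aux.slab m u ε) < volume E :=
    fun u hu => lt_of_lt_of_le (hslab u hu) hEvol
  -- Build the vectors inductively
  have build : ∀ k : ℕ, k ≤ m → ∃ v : ℕ → EuclideanSpace ℝ (Fin m),
      (∀ i < k, v i ∈ E) ∧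
      (∀ i < k, ∀ s ∈ Submodule.span ℝ (v '' {j | j < i}), ε ≤ ‖v i - s‖) := by
    intro k
    induction k with
    | zero => exact fun _ => ⟨fun _ => 0, by omega, by omega⟩
    | succ k ih =>
      intro hk1
      obtain ⟨v, hvE, hvd⟩ := ih (Nat.le_of_succ_le hk1)
      have hSne : Submodule.span ℝ (v '' {j | j < k}) ≠ ⊤ := by
        intro htop
        have himg : v '' {j | j < k} = Set.range (fun i : Fin k => v i) := by
          ext y; constructor
          · rintro ⟨j, hj, rfl⟩; exact ⟨⟨j, hj⟩, rfl⟩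
          · rintro ⟨⟨j, hj⟩, rfl⟩; exact ⟨j, hj, rfl⟩
        have h1 : Module.finrank ℝ (Submodule.span ℝ (v '' {j | j < k})) ≤ k := by
          rw [himg]
          simpa [Set.finrank] using finrank_range_le_card (fun i : Fin k => v i)
        rw [htop] at h1
        have h2 : Module.finrank ℝ
            (⊤ : Submodule ℝ (EuclideanSpace ℝ (Fin m))) = m := by
          rw [finrank_top]; simp [finrank_euclideanSpace]
        omega
      obtain ⟨x, hxE, hxd⟩ := Stmt13Aux.exists_far hε E hEb hslabE _ hSne
      set v' := Function.update v k x with hv'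
      have himg : ∀ i, i ≤ k → v' '' {j | j < i} = v '' {j | j < i} := by
        intro i hi
        apply Set.image_congr
        intro j hj
        exact Function.update_of_ne (by simp only [Set.mem_setOf_eq] at hj; omega) _ _
      refine ⟨v', ?_, ?_⟩
      · intro i hi
        rcases Nat.lt_or_ge i k with h | h
        · rw [show v' i = v i from Function.update_of_ne (by omega) _ _]
          exact hvE i h
        · have hik : i = k := by omega
          subst hik
          rw [show v' i = x from Function.update_self _ _ _]
          exact hxE
      · intro i hi s hs
        rcases Nat.lt_or_ge i k with h | h
        · rw [himg i h.le] at hs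
          rw [show v' i = v i from Function.update_of_ne (by omega) _ _]
          exact hvd i h s hs
        · have hik : i = k := by omega
          subst hik
          rw [himg i le_rfl] at hs
          rw [show v' i = x from Function.update_self _ _ _]
          exact hxd s hs
  obtain ⟨v, hvE, hdist⟩ := build m le_rfl
  set Sk : ℕ → Submodule ℝ (EuclideanSpace ℝ (Fin m)) :=
    fun k => Submodule.span ℝ (v '' {j | j < k}) with hSk
  have hvmem : ∀ k, v k ∈ Sk (k + 1) :=
    fun k => Submodule.subset_span ⟨k, by simp, rfl⟩
  have hvnot : ∀ k < m, v k ∉ Sk k := by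
    intro k hk hmem
    have := hdist k hk (v k) hmem
    simp only [sub_self, norm_zero] at this
    linarith
  have hmono : ∀ k, Sk k ≤ Sk (k + 1) := by
    intro k
    apply Submodule.span_mono
    apply Set.image_mono
    intro j hj
    simp only [Set.mem_setOf_eq] at hj ⊢
    omega
  have hrank : ∀ k, k ≤ m → k ≤ Module.finrank ℝ (Sk k) := by
    intro k
    induction k with
    | zero => intro _; exact Nat.zero_le _
    | succ k ih =>
      intro hk1
      have hk : k ≤ m := Nat.le_of_succ_le hk1
      have hlt : Sk k < Sk (k + 1) := by
        refine lt_of_le_of_ne (hmono k) ?_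
        intro he
        exact hvnot k (by omega) (he ▸ hvmem k)
      have := Submodule.finrank_lt_finrank_of_lt hlt
      have := ih hk
      omega
  have hfinV : Module.finrank ℝ (EuclideanSpace ℝ (Fin m)) = m := by
    simp [finrank_euclideanSpace]
  have htop : Sk m = ⊤ := by
    apply Submodule.eq_top_of_finrank_eq
    have h1 := hrank m le_rfl
    have h2 : Module.finrank ℝ (Sk m) ≤ Module.finrank ℝ (EuclideanSpace ℝ (Fin m)) :=
      Submodule.finrank_le (Sk m)
    rw [hfinV]
    omega
  -- coefficient bound, by induction
  have key : ∀ k, k ≤ m → ∀ w : EuclideanSpace ℝ (Fin m), w ∈ Sk k →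
      ∃ lam : ℕ → ℝ, (∀ i, |lam i| ≤ ε⁻¹ * (1 + ε⁻¹) ^ k * ‖w‖) ∧
        w = ∑ i ∈ Finset.range k, lam i • v i := by
    intro k
    induction k with
    | zero =>
      intro _ w hw
      have hbot : Sk 0 = ⊥ := by
        have he : v '' {j | j < 0} = (∅ : Set (EuclideanSpace ℝ (Fin m))) := by simp
        simp only [hSk, he, Submodule.span_empty]
      rw [hbot, Submodule.mem_bot] at hw
      subst hw
      exact ⟨fun _ => 0, fun i => by simp, by simp⟩
    | succ k ih =>
      intro hk1 w hw
      have hk : k ≤ m := Nat.le_of_succ_le hk1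
      have hsup : Sk (k + 1) = Submodule.span ℝ {v k} ⊔ Sk k := by
        have hins : v '' {j | j < k + 1} = insert (v k) (v '' {j | j < k}) := by
          rw [show {j | j < k + 1} = insert k {j | j < k} from by
            ext j; simp only [Set.mem_setOf_eq, Set.mem_insert_iff]; omega,
            Set.image_insert_eq]
        simp only [hSk, hins, Submodule.span_insert]
      rw [hsup] at hw
      obtain ⟨z, hz, y, hy, rfl⟩ := Submodule.mem_sup.1 hw
      obtain ⟨c, rfl⟩ := Submodule.mem_span_singleton.1 hz
      have hvk : ‖v k‖ ≤ 1 := (mem_ball_zero_iff.1 (hEb (hvE k (by omega)))).le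
      have hc : |c| ≤ ε⁻¹ * ‖c • v k + y‖ := by
        rcases eq_or_ne c 0 with rfl | hc0
        · simp only [abs_zero]
          positivity
        · have hsm : (-(c⁻¹)) • y ∈ Sk k := Submodule.smul_mem _ _ hy
          have hd := hdist k (by omega) _ hsm
          have heq : v k - (-(c⁻¹)) • y = c⁻¹ • (c • v k + y) := by
            rw [smul_add, smul_smul, inv_mul_cancel₀ hc0, one_smul, neg_smul, sub_neg_eq_add]
          rw [heq, norm_smul, Real.norm_eq_abs, abs_inv] at hd
          have hcpos : 0 < |c| := abs_pos.2 hc0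
          have h1 : ε * |c| ≤ ‖c • v k + y‖ := by
            have h2 := mul_le_mul_of_nonneg_left hd hcpos.le
            calc ε * |c| = |c| * ε := mul_comm _ _
            _ ≤ |c| * (|c|⁻¹ * ‖c • v k + y‖) := h2
            _ = ‖c • v k + y‖ := by field_simp
          calc |c| = ε⁻¹ * (ε * |c|) := by field_simp
          _ ≤ ε⁻¹ * ‖c • v k + y‖ := by
            exact mul_le_mul_of_nonneg_left h1 (by positivity)
      have hy_norm : ‖y‖ ≤ (1 + ε⁻¹) * ‖c • v k + y‖ := by
        have h3 : ‖y‖ ≤ ‖c • v k + y‖ + ‖c • v k‖ := by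
          calc ‖y‖ = ‖(c • v k + y) - c • v k‖ := by congr 1; abel
          _ ≤ ‖c • v k + y‖ + ‖c • v k‖ := norm_sub_le _ _
        have h4 : ‖c • v k‖ ≤ ε⁻¹ * ‖c • v k + y‖ := by
          rw [norm_smul, Real.norm_eq_abs]
          calc |c| * ‖v k‖ ≤ (ε⁻¹ * ‖c • v k + y‖) * 1 :=
            mul_le_mul hc hvk (norm_nonneg _) (by positivity)
          _ = ε⁻¹ * ‖c • v k + y‖ := mul_one _
        have hring : (1 + ε⁻¹) * ‖c • v k + y‖
            = ‖c • v k + y‖ + ε⁻¹ * ‖c • v k + y‖ := by ring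
        linarith
      obtain ⟨lam', hlam'b, hlam's⟩ := ih hk y hy
      have hone : (1 : ℝ) ≤ (1 + ε⁻¹) ^ (k + 1) := one_le_pow₀ (by linarith [inv_nonneg.2 hε.le] : (1:ℝ) ≤ 1 + ε⁻¹)
      refine ⟨fun i => if i = k then c else lam' i, ?_, ?_⟩
      · intro i
        by_cases hik : i = k
        · simp only [hik, if_pos rfl]
          calc |c| ≤ ε⁻¹ * ‖c • v k + y‖ := hc
          _ = ε⁻¹ * 1 * ‖c • v k + y‖ := by ring
          _ ≤ ε⁻¹ * (1 + ε⁻¹) ^ (k + 1) * ‖c • v k + y‖ :=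
            mul_le_mul_of_nonneg_right
              (mul_le_mul_of_nonneg_left hone (by positivity)) (norm_nonneg _)
        · simp only [if_neg hik]
          calc |lam' i| ≤ ε⁻¹ * (1 + ε⁻¹) ^ k * ‖y‖ := hlam'b i
          _ ≤ ε⁻¹ * (1 + ε⁻¹) ^ k * ((1 + ε⁻¹) * ‖c • v k + y‖) :=
            mul_le_mul_of_nonneg_left hy_norm (by positivity)
          _ = ε⁻¹ * (1 + ε⁻¹) ^ (k + 1) * ‖c • v k + y‖ := by ring
      · rw [Finset.sum_range_succ]
        have hcongr : ∀ i ∈ Finset.range k,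
            (if i = k then c else lam' i) • v i = lam' i • v i := by
          intro i hi
          rw [if_neg (by have := Finset.mem_range.1 hi; omega)]
        rw [Finset.sum_congr rfl hcongr, ← hlam's]
        have hck : (fun i => if i = k then c else lam' i) k = c := by simp
        rw [hck]
        abel
  -- assemble
  have hrange : Set.range (fun i : Fin m => v ↑i) = v '' {j | j < m} := by
    ext y; constructor
    · rintro ⟨⟨j, hj⟩, rfl⟩; exact ⟨j, hj, rfl⟩
    · rintro ⟨j, hj, rfl⟩; exact ⟨⟨j, hj⟩, rfl⟩
  refine ⟨fun i : Fin m => v ↑i, fun i => hvE i i.isLt, ?_, ?_⟩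
  · apply linearIndependent_of_top_le_span_of_card_eq_finrank
    · rw [hrange]
      rw [show Submodule.span ℝ (v '' {j | j < m}) = Sk m from rfl, htop]
    · simp [hfinV]
  · intro w hw
    have hwS : w ∈ Sk m := htop ▸ Submodule.mem_top
    obtain ⟨lam, hb, hs⟩ := key m le_rfl w hwS
    refine ⟨fun i => lam ↑i, ?_, ?_⟩
    · intro i
      calc |lam ↑i| ≤ ε⁻¹ * (1 + ε⁻¹) ^ m * ‖w‖ := hb ↑i
      _ ≤ ε⁻¹ * (1 + ε⁻¹) ^ m * 1 :=
        mul_le_mul_of_nonneg_left (mem_ball_zero_iff.1 hw).le (by positivity)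
      _ = ε⁻¹ * (1 + ε⁻¹) ^ m := mul_one _
    · rw [hs, ← Fin.sum_univ_eq_sum_range (fun i => lam i • v i) m]
end
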